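/- Let X ∈ ℝ^{m×n} be T₁-sparse with parameters (v, t₁, t₂, c) with c > 0 and v ≥ 1, let u > 0 satisfy n·(n+1)·u ≤ 1/64, and let s satisfy s ≥ 11·(m·u + (n+1)·u)·(v·t₁ + n·t₂)·c². Suppose Y ∈ ℝ^{n×n} and E ∈ ℝ^{n×n} satisfy YᵀY = XᵀX + s·I + E with ‖E‖₂ ≤ 0.1·s, and suppose W ∈ ℝ^{m×n} is such that for every row index i there exists ΔY_i ∈ ℝ^{n×n} with ‖ΔY_i‖₂ ≤ 1.03·n·√n·u·c·√t₁ and w_iᵀ·(Y + ΔY_i) = x_iᵀ, where w_iᵀ and x_iᵀ are the i-th rows of W and X. Then ‖W·Y − X‖₂ ≤ ‖W·Y − X‖_F ≤ 1.09·n·√n·u·√t₁·√(v·t₁ + n·t₂)·c²/√(σ_min(X)² + 0.9·s). -/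

import Mathlib

open Matrix Finset

noncomputable def specNorm {m n : ℕ} (A : Matrix (Fin m) (Fin n) ℝ) : ℝ :=
  ‖(Matrix.toEuclideanLin A).toContinuousLinearMap‖

noncomputable def frobNorm {m n : ℕ} (A : Matrix (Fin m) (Fin n) ℝ) : ℝ :=
  Real.sqrt (∑ i, ∑ j, (A i j) ^ 2)

noncomputable def gNorm {m n : ℕ} (A : Matrix (Fin m) (Fin n) ℝ) : ℝ :=
  ⨆ j : Fin n, Real.sqrt (∑ i, (A i j) ^ 2)

noncomputable def sigmaMin {m n : ℕ} (A : Matrix (Fin m) (Fin n) ℝ) : ℝ :=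
  ⨅ x : Metric.sphere (0 : EuclideanSpace ℝ (Fin n)) 1,
    ‖(Matrix.toEuclideanLin A) (x : EuclideanSpace ℝ (Fin n))‖

noncomputable def condNum {m n : ℕ} (A : Matrix (Fin m) (Fin n) ℝ) : ℝ :=
  specNorm A / sigmaMin A

def IsT1Sparse {m n : ℕ} (X : Matrix (Fin m) (Fin n) ℝ) (v t₁ t₂ : ℕ) (c : ℝ) : Prop :=
  ∃ S : Finset (Fin n), S.card = v ∧
    (∀ j ∈ S, Set.ncard {i | X i j ≠ 0} ≤ t₁) ∧
    (∀ j ∉ S, Set.ncard {i | X i j ≠ 0} ≤ t₂) ∧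
    ∀ i j, |X i j| ≤ c

noncomputable def ev {k : ℕ} (y : Fin k → ℝ) : EuclideanSpace ℝ (Fin k) :=
  (WithLp.equiv 2 (Fin k → ℝ)).symm y

lemma ev_apply {k : ℕ} (y : Fin k → ℝ) (i : Fin k) : ev y i = y i := rfl

lemma ev_norm {k : ℕ} (y : Fin k → ℝ) : ‖ev y‖ = Real.sqrt (∑ i, (y i)^2) := by
  rw [EuclideanSpace.norm_eq]
  congr 1
  refine Finset.sum_congr rfl fun i _ => ?_
  rw [ev_apply, Real.norm_eq_abs, sq_abs]

lemma ev_zero_iff {k : ℕ} (y : Fin k → ℝ) : ev y = 0 ↔ y = 0 := by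
  constructor
  · intro h; funext i
    have := congrFun (congrArg (WithLp.equiv 2 (Fin k → ℝ)) h) i
    simpa [ev] using this
  · intro h; simp only [h, ev]; rfl

lemma toEuclideanLin_ev {m n : ℕ} (A : Matrix (Fin m) (Fin n) ℝ) (x : Fin n → ℝ) :
    Matrix.toEuclideanLin A (ev x) = ev (A *ᵥ x) := by
  rw [Matrix.toEuclideanLin_apply]
  simp [ev]

lemma inner_ev {k : ℕ} (a b : Fin k → ℝ) : inner ℝ (ev a) (ev b) = a ⬝ᵥ b := by
  rw [PiLp.inner_apply]
  simp [ev_apply, dotProduct, mul_comm]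

lemma norm_ev_sq {k : ℕ} (y : Fin k → ℝ) : ‖ev y‖^2 = y ⬝ᵥ y := by
  rw [← inner_ev, real_inner_self_eq_norm_sq]

lemma abs_dot_le {k : ℕ} (a b : Fin k → ℝ) : |a ⬝ᵥ b| ≤ ‖ev a‖ * ‖ev b‖ := by
  rw [← inner_ev]; exact abs_real_inner_le_norm _ _

lemma mulVec_norm_le {m n : ℕ} (A : Matrix (Fin m) (Fin n) ℝ) (x : Fin n → ℝ) :
    ‖ev (A *ᵥ x)‖ ≤ specNorm A * ‖ev x‖ := by
  rw [← toEuclideanLin_ev]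
  exact ((Matrix.toEuclideanLin A).toContinuousLinearMap).le_opNorm (ev x)

lemma sigmaMin_mulVec {m n : ℕ} (A : Matrix (Fin m) (Fin n) ℝ) (x : Fin n → ℝ) :
    sigmaMin A * ‖ev x‖ ≤ ‖ev (A *ᵥ x)‖ := by
  by_cases hx : ev x = 0
  · have hx0 : x = 0 := (ev_zero_iff x).mp hx
    subst hx0
    rw [hx, norm_zero, mul_zero]
    exact norm_nonneg _
  · have hnx : 0 < ‖ev x‖ := norm_pos_iff.mpr hx
    set u : EuclideanSpace ℝ (Fin n) := ‖ev x‖⁻¹ • ev x with hu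
    have hus : u ∈ Metric.sphere (0 : EuclideanSpace ℝ (Fin n)) 1 := by
      rw [mem_sphere_zero_iff_norm, hu, norm_smul, norm_inv, norm_norm]
      field_simp
    have hbdd : BddBelow (Set.range fun x : Metric.sphere (0 : EuclideanSpace ℝ (Fin n)) 1 =>
        ‖(Matrix.toEuclideanLin A) (x : EuclideanSpace ℝ (Fin n))‖) := by
      refine ⟨0, ?_⟩
      rintro y ⟨z, rfl⟩
      exact norm_nonneg _
    have h1 : sigmaMin A ≤ ‖(Matrix.toEuclideanLin A) u‖ := ciInf_le hbdd ⟨u, hus⟩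
    have h2 : ‖(Matrix.toEuclideanLin A) u‖ = ‖ev x‖⁻¹ * ‖ev (A *ᵥ x)‖ := by
      rw [hu, _root_.map_smul, norm_smul, norm_inv, norm_norm, toEuclideanLin_ev]
    rw [h2] at h1
    have := mul_le_mul_of_nonneg_right h1 (le_of_lt hnx)
    calc sigmaMin A * ‖ev x‖ ≤ ‖ev x‖⁻¹ * ‖ev (A *ᵥ x)‖ * ‖ev x‖ := this
      _ = ‖ev (A *ᵥ x)‖ := by field_simp

lemma sigmaMin_nonneg {m n : ℕ} (A : Matrix (Fin m) (Fin n) ℝ) : 0 ≤ sigmaMin A :=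
  Real.iInf_nonneg fun _ => norm_nonneg _

lemma specNorm_le_frobNorm {m n : ℕ} (A : Matrix (Fin m) (Fin n) ℝ) :
    specNorm A ≤ frobNorm A := by
  apply ContinuousLinearMap.opNorm_le_bound _ (Real.sqrt_nonneg _)
  intro x'
  set x : Fin n → ℝ := (WithLp.equiv 2 (Fin n → ℝ)) x' with hx
  have hx' : ev x = x' := rfl
  have h1 : ‖(Matrix.toEuclideanLin A).toContinuousLinearMap x'‖ = ‖ev (A *ᵥ x)‖ := by
    rw [← hx', LinearMap.coe_toContinuousLinearMap', toEuclideanLin_ev]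
  rw [h1, ← hx', ev_norm, ev_norm]
  rw [← Real.sqrt_mul (by positivity)]
  apply Real.sqrt_le_sqrt
  rw [Finset.sum_mul]
  apply Finset.sum_le_sum
  intro i _
  have := Finset.sum_mul_sq_le_sq_mul_sq Finset.univ (fun j => A i j) x
  calc (A.mulVec x i)^2 = (∑ j, A i j * x j)^2 := by rfl
    _ ≤ (∑ j, (A i j)^2) * ∑ j, (x j)^2 := this

lemma vecMul_norm_le {m n : ℕ} (A : Matrix (Fin m) (Fin n) ℝ) (w : Fin m → ℝ) :
    ‖ev (w ᵥ* A)‖ ≤ specNorm A * ‖ev w‖ := by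
  set y := w ᵥ* A with hy
  by_cases h0 : ev y = 0
  · rw [h0, norm_zero]
    exact mul_nonneg (norm_nonneg _) (norm_nonneg _)
  · have hpos : 0 < ‖ev y‖ := norm_pos_iff.mpr h0
    have h1 : ‖ev y‖^2 = y ⬝ᵥ y := norm_ev_sq y
    have h2 : y ⬝ᵥ y = w ⬝ᵥ (A *ᵥ y) := by
      rw [Matrix.dotProduct_mulVec, ← hy]
    have h3 : w ⬝ᵥ (A *ᵥ y) ≤ ‖ev w‖ * ‖ev (A *ᵥ y)‖ :=
      le_trans (le_abs_self _) (abs_dot_le _ _)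
    have h4 : ‖ev (A *ᵥ y)‖ ≤ specNorm A * ‖ev y‖ := mulVec_norm_le A y
    have h5 : ‖ev y‖^2 ≤ ‖ev w‖ * (specNorm A * ‖ev y‖) := by
      rw [h1, h2]
      exact le_trans h3 (mul_le_mul_of_nonneg_left h4 (norm_nonneg _))
    nlinarith [hpos]

lemma vecMul_lower {n : ℕ} (B : Matrix (Fin n) (Fin n) ℝ) (β : ℝ) (hβ : 0 < β)
    (h : ∀ x : Fin n → ℝ, β * ‖ev x‖ ≤ ‖ev (B *ᵥ x)‖) (w : Fin n → ℝ) :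
    β * ‖ev w‖ ≤ ‖ev (w ᵥ* B)‖ := by
  have hinj : Function.Injective B.mulVecLin := by
    rw [← LinearMap.ker_eq_bot, LinearMap.ker_eq_bot']
    intro x hx
    rw [Matrix.mulVecLin_apply] at hx
    have := h x
    rw [hx] at this
    have hevz : ev (0 : Fin n → ℝ) = 0 := (ev_zero_iff 0).mpr rfl
    rw [hevz, norm_zero] at this
    have h6 : ‖ev x‖ ≤ 0 := nonpos_of_mul_nonpos_right this hβ
    have h7 : ev x = 0 := norm_le_zero_iff.mp h6
    exact (ev_zero_iff x).mp h7
  have hsurj : Function.Surjective B.mulVecLin :=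
    LinearMap.injective_iff_surjective.mp hinj
  obtain ⟨z, hz⟩ := hsurj w
  rw [Matrix.mulVecLin_apply] at hz
  by_cases h0 : ev w = 0
  · rw [h0, norm_zero, mul_zero]; exact norm_nonneg _
  · have hpos : 0 < ‖ev w‖ := norm_pos_iff.mpr h0
    have h1 : ‖ev w‖^2 = w ⬝ᵥ (B *ᵥ z) := by rw [norm_ev_sq, hz]
    have h2 : w ⬝ᵥ (B *ᵥ z) = (w ᵥ* B) ⬝ᵥ z := Matrix.dotProduct_mulVec w B z
    have h3 : (w ᵥ* B) ⬝ᵥ z ≤ ‖ev (w ᵥ* B)‖ * ‖ev z‖ :=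
      le_trans (le_abs_self _) (abs_dot_le _ _)
    have h4 : β * ‖ev z‖ ≤ ‖ev w‖ := by rw [← hz] at *; exact le_of_le_of_eq (h z) rfl
    nlinarith [norm_nonneg (ev (w ᵥ* B)), norm_nonneg (ev z)]

lemma norm_ev_sq' {k : ℕ} (y : Fin k → ℝ) : ‖ev y‖^2 = ∑ j, (y j)^2 := by
  rw [ev_norm, Real.sq_sqrt (by positivity)]

lemma le_of_sq {a b : ℝ} (ha : 0 ≤ a) (hb : 0 ≤ b) (h : a^2 ≤ b^2) : a ≤ b := by nlinarith

lemma gram_dot {m n : ℕ} (A : Matrix (Fin m) (Fin n) ℝ) (x : Fin n → ℝ) :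
    x ⬝ᵥ ((Aᵀ * A) *ᵥ x) = (A *ᵥ x) ⬝ᵥ (A *ᵥ x) := by
  rw [← Matrix.mulVec_mulVec, Matrix.dotProduct_mulVec, Matrix.vecMul_transpose]

lemma col_bound {m : ℕ} (y : Fin m → ℝ) (c : ℝ) (t : ℕ)
    (hc : ∀ i, |y i| ≤ c) (ht : Set.ncard {i | y i ≠ 0} ≤ t) :
    ∑ i, (y i)^2 ≤ (t : ℝ) * c^2 := by
  classical
  have h1 : ∑ i ∈ Finset.univ.filter (fun i => y i ≠ 0), (y i)^2 = ∑ i, (y i)^2 :=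
    Finset.sum_filter_of_ne (fun i _ h => by
      intro h0; rw [h0] at h; simp at h)
  have h2 : {i | y i ≠ 0}.ncard = (Finset.univ.filter (fun i => y i ≠ 0)).card := by
    rw [Set.ncard_eq_toFinset_card', Set.toFinset_setOf]
  have h3 : ∑ i ∈ Finset.univ.filter (fun i => y i ≠ 0), (y i)^2 ≤
      ((Finset.univ.filter (fun i => y i ≠ 0)).card : ℝ) * c^2 := by
    have := Finset.sum_le_card_nsmul (Finset.univ.filter (fun i => y i ≠ 0))
      (fun i => (y i)^2) (c^2) (fun i _ => by
        have := hc i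
        calc (y i)^2 = |y i|^2 := (sq_abs _).symm
          _ ≤ c^2 := pow_le_pow_left₀ (abs_nonneg _) this 2)
    simpa [nsmul_eq_mul] using this
  have h4 : ((Finset.univ.filter (fun i => y i ≠ 0)).card : ℝ) ≤ (t : ℝ) := by
    rw [← h2] at *
    exact_mod_cast ht
  rw [← h1]
  have hc2 : (0:ℝ) ≤ c^2 := sq_nonneg c
  nlinarith

set_option maxHeartbeats 4000000 in
/-- Bound on ‖WY − X‖ for the shifted first step applied to a T₁-sparse X. -/
theorem stmt12 {m n : ℕ} (X W : Matrix (Fin m) (Fin n) ℝ)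
    (Y E : Matrix (Fin n) (Fin n) ℝ) (v t₁ t₂ : ℕ) (c u s : ℝ)
    (hv1 : 1 ≤ v) (hvn : v ≤ n) (ht : t₂ ≤ t₁) (htm : t₁ ≤ m) (hc : 0 < c)
    (hX : IsT1Sparse X v t₁ t₂ c) (hu : 0 < u)
    (hnnu : (n : ℝ) * (n + 1) * u ≤ 1 / 64)
    (hs : 11 * ((m : ℝ) * u + ((n : ℝ) + 1) * u) * ((v : ℝ) * t₁ + (n : ℝ) * t₂) * c ^ 2 ≤ s)
    (hGram : Yᵀ * Y = Xᵀ * X + s • (1 : Matrix (Fin n) (Fin n) ℝ) + E)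
    (hE : specNorm E ≤ 0.1 * s)
    (hW : ∀ i : Fin m, ∃ ΔY : Matrix (Fin n) (Fin n) ℝ,
      specNorm ΔY ≤ 1.03 * (n : ℝ) * Real.sqrt n * u * c * Real.sqrt t₁ ∧
      Matrix.vecMul (W i) (Y + ΔY) = X i) :
    specNorm (W * Y - X) ≤ frobNorm (W * Y - X) ∧
    frobNorm (W * Y - X) ≤
      1.09 * (n : ℝ) * Real.sqrt n * u * Real.sqrt t₁ *
        Real.sqrt ((v : ℝ) * t₁ + (n : ℝ) * t₂) * c ^ 2 /
        Real.sqrt (sigmaMin X ^ 2 + 0.9 * s) := by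
  obtain ⟨S, hScard, hS1, hS2, hSc⟩ := hX
  have hn1 : 1 ≤ n := le_trans hv1 hvn
  set K : ℝ := (v:ℝ)*t₁ + (n:ℝ)*t₂ with hKdef
  have hK0 : 0 ≤ K := by positivity
  have hs0 : 0 ≤ s := le_trans (by positivity) hs
  -- row identity
  have hrowD : ∀ (i : Fin m) (ΔY : Matrix (Fin n) (Fin n) ℝ), W i ᵥ* (Y + ΔY) = X i →
      ∀ j, (W * Y - X) i j = -((W i ᵥ* ΔY) j) := by
    intro i ΔY hwy j
    have h1 : W i ᵥ* Y + W i ᵥ* ΔY = X i := by rw [← Matrix.vecMul_add]; exact hwy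
    have h2 : (W * Y) i j = (W i ᵥ* Y) j := by
      simp [Matrix.mul_apply, Matrix.vecMul, dotProduct]
    have h3 := congrFun h1 j
    simp only [Pi.add_apply] at h3
    simp only [Matrix.sub_apply, h2]
    linarith
  refine ⟨specNorm_le_frobNorm _, ?_⟩
  -- Frobenius bound on X
  have hXF : ∑ i, ∑ j, (X i j)^2 ≤ K * c^2 := by
    rw [Finset.sum_comm]
    have hSsum : ∑ j ∈ S, ∑ i, (X i j)^2 ≤ (S.card : ℝ) * ((t₁:ℝ)*c^2) := by
      have := Finset.sum_le_card_nsmul S (fun j => ∑ i, (X i j)^2) ((t₁:ℝ)*c^2)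
        (fun j hj => col_bound (fun i => X i j) c t₁ (fun i => hSc i j) (hS1 j hj))
      simpa [nsmul_eq_mul] using this
    have hScsum : ∑ j ∈ Sᶜ, ∑ i, (X i j)^2 ≤ ((Sᶜ : Finset (Fin n)).card : ℝ) * ((t₂:ℝ)*c^2) := by
      have := Finset.sum_le_card_nsmul Sᶜ (fun j => ∑ i, (X i j)^2) ((t₂:ℝ)*c^2)
        (fun j hj => col_bound (fun i => X i j) c t₂ (fun i => hSc i j)
          (hS2 j (Finset.mem_compl.mp hj)))
      simpa [nsmul_eq_mul] using this
    have hcombine := Finset.sum_add_sum_compl S (fun j => ∑ i, (X i j)^2)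
    have hcomp : ((Sᶜ : Finset (Fin n)).card : ℝ) ≤ (n:ℝ) := by
      have h := Finset.card_le_univ (Sᶜ : Finset (Fin n))
      have h2 : Fintype.card (Fin n) = n := Fintype.card_fin n
      exact_mod_cast le_trans h (le_of_eq h2)
    have hvS : (S.card : ℝ) = (v : ℝ) := by exact_mod_cast hScard
    have ht2c : (0:ℝ) ≤ (t₂:ℝ)*c^2 := by positivity
    rw [hvS] at hSsum
    rw [← hcombine, hKdef]
    nlinarith [hSsum, hScsum, mul_le_mul_of_nonneg_right hcomp ht2c]
  -- sigma0
  set σ0 : ℝ := Real.sqrt (sigmaMin X ^ 2 + 0.9 * s) with hσ0def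
  have hσ0sq : σ0^2 = sigmaMin X^2 + 0.9*s := Real.sq_sqrt (by nlinarith [sq_nonneg (sigmaMin X)])
  have hσ00 : 0 ≤ σ0 := Real.sqrt_nonneg _
  have hY : ∀ x : Fin n → ℝ, σ0 * ‖ev x‖ ≤ ‖ev (Y *ᵥ x)‖ := by
    intro x
    apply le_of_sq (by positivity) (norm_nonneg _)
    have hg : (Y *ᵥ x) ⬝ᵥ (Y *ᵥ x) = (X *ᵥ x) ⬝ᵥ (X *ᵥ x) + s*(x ⬝ᵥ x) + x ⬝ᵥ (E *ᵥ x) := by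
      rw [← gram_dot Y x, hGram, Matrix.add_mulVec, Matrix.add_mulVec,
        Matrix.smul_mulVec, Matrix.one_mulVec, dotProduct_add,
        dotProduct_add, dotProduct_smul, gram_dot]
      simp [smul_eq_mul]
    have hEb : |x ⬝ᵥ (E *ᵥ x)| ≤ 0.1*s*‖ev x‖^2 := by
      have h1 := abs_dot_le x (E *ᵥ x)
      have h2 := mulVec_norm_le E x
      calc |x ⬝ᵥ (E *ᵥ x)| ≤ ‖ev x‖*‖ev (E *ᵥ x)‖ := h1
        _ ≤ ‖ev x‖*(specNorm E*‖ev x‖) := mul_le_mul_of_nonneg_left h2 (norm_nonneg _)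
        _ = specNorm E*‖ev x‖^2 := by ring
        _ ≤ 0.1*s*‖ev x‖^2 := mul_le_mul_of_nonneg_right hE (sq_nonneg _)
    have hXb : sigmaMin X^2*‖ev x‖^2 ≤ (X *ᵥ x) ⬝ᵥ (X *ᵥ x) := by
      have h1 := sigmaMin_mulVec X x
      have h2 := pow_le_pow_left₀ (mul_nonneg (sigmaMin_nonneg X) (norm_nonneg _)) h1 2
      rw [norm_ev_sq (X *ᵥ x)] at h2
      calc sigmaMin X^2*‖ev x‖^2 = (sigmaMin X*‖ev x‖)^2 := by ring
        _ ≤ (X *ᵥ x) ⬝ᵥ (X *ᵥ x) := h2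
    have hxx : x ⬝ᵥ x = ‖ev x‖^2 := (norm_ev_sq x).symm
    have hy2 : ‖ev (Y *ᵥ x)‖^2 = (Y *ᵥ x) ⬝ᵥ (Y *ᵥ x) := norm_ev_sq _
    rw [hy2, hg, hxx, mul_pow, hσ0sq]
    have habs := abs_le.mp hEb
    nlinarith [habs.1]
  by_cases ht1 : t₁ = 0
  · -- degenerate case
    subst ht1
    have hzero : ∀ i j, (W*Y - X) i j = 0 := by
      intro i j
      obtain ⟨ΔY, hΔ, hwy⟩ := hW i
      have hΔ0 : specNorm ΔY ≤ 0 := by simpa using hΔ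
      have h1 : ‖ev (W i ᵥ* ΔY)‖ ≤ 0 := by
        refine le_trans (vecMul_norm_le ΔY (W i)) ?_
        nlinarith [norm_nonneg (ev (W i))]
      have h2 : W i ᵥ* ΔY = 0 := (ev_zero_iff _).mp (norm_le_zero_iff.mp h1)
      rw [hrowD i ΔY hwy j, h2]
      simp
    have hfrob : frobNorm (W*Y - X) = 0 := by
      have hz : ∑ i, ∑ j, ((W*Y-X) i j)^2 = 0 := by
        apply Finset.sum_eq_zero; intro i _
        apply Finset.sum_eq_zero; intro j _
        rw [hzero]; ring
      show Real.sqrt (∑ i, ∑ j, ((W*Y-X) i j)^2) = 0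
      rw [hz, Real.sqrt_zero]
    rw [hfrob]
    positivity
  -- main case
  have ht11 : (1:ℝ) ≤ (t₁:ℝ) := by exact_mod_cast Nat.one_le_iff_ne_zero.mpr ht1
  have hn1r : (1:ℝ) ≤ (n:ℝ) := by exact_mod_cast hn1
  set ε : ℝ := 1.03 * (n : ℝ) * Real.sqrt n * u * c * Real.sqrt t₁ with hεdef
  have hε0 : 0 ≤ ε := by rw [hεdef]; positivity
  have hsqrtn : Real.sqrt (n:ℝ) * Real.sqrt (n:ℝ) = (n:ℝ) := Real.mul_self_sqrt (by positivity)
  have hsqrtt : Real.sqrt (t₁:ℝ) * Real.sqrt (t₁:ℝ) = (t₁:ℝ) := Real.mul_self_sqrt (by positivity)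
  have hsqrtK : Real.sqrt K * Real.sqrt K = K := Real.mul_self_sqrt hK0
  have hε2 : ε^2 = 1.03^2*(n:ℝ)^2*(n:ℝ)*u^2*c^2*(t₁:ℝ) := by
    have h : ε^2 = 1.03^2*((n:ℝ)^2)*(Real.sqrt n*Real.sqrt n)*u^2*c^2*(Real.sqrt t₁*Real.sqrt t₁) := by
      rw [hεdef]; ring
    rw [h, hsqrtn, hsqrtt]
  have hKt : (t₁:ℝ) ≤ K := by
    have hv1r : (1:ℝ) ≤ (v:ℝ) := by exact_mod_cast hv1
    have : (0:ℝ) ≤ (n:ℝ)*(t₂:ℝ) := by positivity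
    nlinarith [(Nat.cast_nonneg t₁ : (0:ℝ) ≤ (t₁:ℝ))]
  have hmt : (t₁:ℝ) ≤ (m:ℝ) := by exact_mod_cast htm
  have hslb : 11*u*((t₁:ℝ)+(n:ℝ)+1)*(t₁:ℝ)*c^2 ≤ s := by
    refine le_trans ?_ hs
    have e1 : ((t₁:ℝ)+(n:ℝ)+1)*u ≤ ((m:ℝ)+(n:ℝ)+1)*u := by nlinarith
    have e2 : ((t₁:ℝ)+(n:ℝ)+1)*u*(t₁:ℝ) ≤ ((m:ℝ)+(n:ℝ)+1)*u*K :=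
      mul_le_mul e1 hKt (by positivity) (by positivity)
    nlinarith [mul_le_mul_of_nonneg_right e2 (sq_nonneg c)]
  have hspos : 0 < s := by
    have hc2 : (0:ℝ) < c^2 := by positivity
    have hp := mul_pos (mul_pos (mul_pos (mul_pos (by norm_num : (0:ℝ) < 11) hu)
      (by linarith : (0:ℝ) < (t₁:ℝ)+(n:ℝ)+1)) (by linarith : (0:ℝ) < (t₁:ℝ))) hc2
    linarith
  have hσ0pos : 0 < σ0 := by
    rw [hσ0def]
    exact Real.sqrt_pos.mpr (by nlinarith [sq_nonneg (sigmaMin X)])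
  have hn2u : (n:ℝ)^2*u ≤ 1/64 := by nlinarith [mul_nonneg (Nat.cast_nonneg n : (0:ℝ) ≤ (n:ℝ)) hu.le]
  have hεσ : 109*ε ≤ 6*σ0 := by
    apply le_of_sq (by positivity) (by positivity)
    have hA := mul_le_mul_of_nonneg_right hn2u
      (mul_nonneg (Nat.cast_nonneg n : (0:ℝ) ≤ (n:ℝ)) hu.le)
    -- hA : n^2*u*(n*u) ≤ 1/64*(n*u)
    have hB := mul_le_mul_of_nonneg_right hA
      (mul_nonneg (by positivity : (0:ℝ) ≤ (t₁:ℝ)) (sq_nonneg c))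
    -- hB : n^2*u*(n*u)*(t₁*c^2) ≤ 1/64*(n*u)*(t₁*c^2)
    have hC : (109*ε)^2 = 11881*(1.03^2*(n:ℝ)^2*(n:ℝ)*u^2*c^2*(t₁:ℝ)) := by
      rw [← hε2]; ring
    have hD : (6*σ0)^2 = 36*(sigmaMin X^2 + 0.9*s) := by rw [mul_pow, hσ0sq]; ring
    rw [hC, hD]
    have hpos1 : (0:ℝ) ≤ u*(t₁:ℝ)*c^2 := by positivity
    have hpos2 : (0:ℝ) ≤ u*(t₁:ℝ)^2*c^2 := by positivity
    have hpos3 : (0:ℝ) ≤ (n:ℝ)*u*(t₁:ℝ)*c^2 := by positivity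
    linarith [sq_nonneg (sigmaMin X), hslb, hB, hpos1, hpos2, hpos3]
  set β : ℝ := σ0 - ε with hβdef
  have hβpos : 0 < β := by rw [hβdef]; linarith
  have hβ103 : 1.03*σ0 ≤ 1.09*β := by rw [hβdef]; linarith
  -- per-row bound
  have hrow : ∀ i, ∑ j, ((W*Y - X) i j)^2 ≤ (ε/β)^2 * ∑ j, (X i j)^2 := by
    intro i
    obtain ⟨ΔY, hΔ, hwy⟩ := hW i
    have hΔ' : specNorm ΔY ≤ ε := hΔ
    have hBlb : ∀ x : Fin n → ℝ, β*‖ev x‖ ≤ ‖ev ((Y+ΔY) *ᵥ x)‖ := by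
      intro x
      have h1 : ev ((Y+ΔY) *ᵥ x) = ev (Y *ᵥ x) + ev (ΔY *ᵥ x) := by
        rw [Matrix.add_mulVec]; rfl
      have h2 := norm_le_add_norm_add (ev (Y *ᵥ x)) (ev (ΔY *ᵥ x))
      have h3 : ‖ev (ΔY *ᵥ x)‖ ≤ ε*‖ev x‖ :=
        le_trans (mulVec_norm_le ΔY x) (mul_le_mul_of_nonneg_right hΔ' (norm_nonneg _))
      have h4 := hY x
      rw [h1]
      have h5 : β*‖ev x‖ = σ0*‖ev x‖ - ε*‖ev x‖ := by rw [hβdef]; ring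
      linarith
    have hwb : β*‖ev (W i)‖ ≤ ‖ev (X i)‖ := by
      have h := vecMul_lower (Y+ΔY) β hβpos hBlb (W i)
      rwa [hwy] at h
    have hd : ‖ev (W i ᵥ* ΔY)‖ ≤ ε*(‖ev (X i)‖/β) := by
      have h5 := vecMul_norm_le ΔY (W i)
      have h6 : ‖ev (W i)‖ ≤ ‖ev (X i)‖/β := by
        rw [le_div_iff₀ hβpos]; linarith
      calc ‖ev (W i ᵥ* ΔY)‖ ≤ specNorm ΔY*‖ev (W i)‖ := h5
        _ ≤ ε*(‖ev (X i)‖/β) := mul_le_mul hΔ' h6 (norm_nonneg _) hε0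
    have h7 : ∑ j, ((W*Y-X) i j)^2 = ‖ev (W i ᵥ* ΔY)‖^2 := by
      rw [norm_ev_sq']
      refine Finset.sum_congr rfl fun j _ => ?_
      rw [hrowD i ΔY hwy j]; ring
    rw [h7]
    calc ‖ev (W i ᵥ* ΔY)‖^2 ≤ (ε*(‖ev (X i)‖/β))^2 :=
          pow_le_pow_left₀ (norm_nonneg _) hd 2
      _ = (ε/β)^2*‖ev (X i)‖^2 := by ring
      _ = (ε/β)^2*∑ j, (X i j)^2 := by rw [norm_ev_sq']
  have htot : ∑ i, ∑ j, ((W*Y-X) i j)^2 ≤ (ε/β)^2*(K*c^2) := by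
    calc ∑ i, ∑ j, ((W*Y-X) i j)^2 ≤ ∑ i, (ε/β)^2*∑ j, (X i j)^2 :=
          Finset.sum_le_sum (fun i _ => hrow i)
      _ = (ε/β)^2*∑ i, ∑ j, (X i j)^2 := by rw [Finset.mul_sum]
      _ ≤ (ε/β)^2*(K*c^2) := mul_le_mul_of_nonneg_left hXF (by positivity)
  have hmid : frobNorm (W*Y-X) ≤ ε*Real.sqrt K*c/β := by
    have h10 : (ε*Real.sqrt K*c/β)^2 = (ε/β)^2*(K*c^2) := by
      have h : (ε*Real.sqrt K*c/β)^2 = (ε/β)^2*(Real.sqrt K*Real.sqrt K)*c^2 := by ring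
      rw [h, hsqrtK]; ring
    calc frobNorm (W*Y-X) = Real.sqrt (∑ i, ∑ j, ((W*Y-X) i j)^2) := rfl
      _ ≤ Real.sqrt ((ε*Real.sqrt K*c/β)^2) := Real.sqrt_le_sqrt (by rw [h10]; exact htot)
      _ = ε*Real.sqrt K*c/β := Real.sqrt_sq (by positivity)
  refine le_trans hmid ?_
  rw [div_le_div_iff₀ hβpos hσ0pos]
  have hP : (0:ℝ) ≤ (n:ℝ)*Real.sqrt n*u*Real.sqrt t₁*Real.sqrt K*c^2 := by positivity
  have e5 : ε*Real.sqrt K*c*σ0 = (1.03*σ0)*((n:ℝ)*Real.sqrt n*u*Real.sqrt t₁*Real.sqrt K*c^2) := by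
    rw [hεdef]; ring
  have e6 : 1.09*(n:ℝ)*Real.sqrt n*u*Real.sqrt t₁*Real.sqrt K*c^2*β =
      (1.09*β)*((n:ℝ)*Real.sqrt n*u*Real.sqrt t₁*Real.sqrt K*c^2) := by ring
  rw [e5, e6]
  exact mul_le_mul_of_nonneg_right hβ103 hP
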